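/- Let X be a finite set. Consider the graph whose vertices are the partitions of X, with an edge between two partitions if and only if one is obtained from the other by gluing two of its blocks into one. This graph is connected, and for any two partitions p and p' of X the graph distance between p and p' equals nc(p) + nc(p') − 2·nc(p∨p'); equivalently, the geodesic distance d(p,p') (half the graph distance) equals (nc(p)+nc(p'))/2 − nc(p∨p'). -/

import Mathlib

open Sum
open scoped Classical

noncomputable section

namespace PartitionPaper

variable {X : Type*}

/-- The number of blocks of a partition of `X`, encoded as a setoid on `X`. -/
def nc (p : Setoid X) : ℕ := Nat.card (Quotient p)

/-- The geodesic distance `d(p,p') = (nc p + nc p')/2 - nc (p ⊔ p')`. -/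
def pdist (p q : Setoid X) : ℚ :=
  ((nc p : ℚ) + (nc q : ℚ)) / 2 - (nc (p ⊔ q) : ℚ)

/-- Geodesic order with base partition `b` : `p' ≤_b p`. -/
def geoLE (b p' p : Setoid X) : Prop := pdist b p' + pdist p' p = pdist b p

/-- Coarser-compatible order `p' ⊣_b p` : `p'` coarser than `p` and
`nc (p' ⊔ b) = nc (p ⊔ b)`.  (In the setoid lattice, `p ≤ p'` means `p` is finer.) -/
def coarserComp (b p' p : Setoid X) : Prop :=
  p ≤ p' ∧ nc (p' ⊔ b) = nc (p ⊔ b)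

/-- Finer-compatible order `p' ⊐_b p` : `p'` finer than `p` and
`nc p' - nc (p' ⊔ b) = nc p - nc (p ⊔ b)`. -/
def finerComp (b p' p : Setoid X) : Prop :=
  p' ≤ p ∧ (nc p' : ℤ) - (nc (p' ⊔ b) : ℤ) = (nc p : ℤ) - (nc (p ⊔ b) : ℤ)

/-- `p'` is obtained from `p` by gluing two blocks of `p` into one. -/
def IsGluing (p p' : Setoid X) : Prop := p ≤ p' ∧ nc p' + 1 = nc p

/-- The Cayley graph on partitions of `X`: an edge iff one partition is obtained
from the other by gluing two of its blocks into one. -/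
def glueGraph (X : Type*) : SimpleGraph (Setoid X) where
  Adj p q := IsGluing p q ∨ IsGluing q p
  symm := ⟨fun _ _ h => h.elim Or.inr Or.inl⟩
  loopless := by
    constructor
    intro p h
    rcases h with ⟨-, h⟩ | ⟨-, h⟩ <;> omega

/-- The segment `[p₁, p₂]` for the geodesic distance. -/
def seg (p₁ p₂ : Setoid X) : Set (Setoid X) :=
  {p | pdist p₁ p + pdist p p₂ = pdist p₁ p₂}

/-- The defect of `p'` from being on `[b, p]`. -/
def df (b p' p : Setoid X) : ℚ := pdist b p' + pdist p' p - pdist b p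

/-- Admissible one-step splits: `p'` is obtained by cutting a (pivotal) block of `p`
into two blocks in such a way that the join with `b` gains one block. -/
def Delta (b p : Setoid X) : Set (Setoid X) :=
  {p' | p' ≤ p ∧ nc p' = nc p + 1 ∧ nc (p' ⊔ b) = nc (p ⊔ b) + 1}

/-- The admissible splits `Sp_b(p) = ⋃ₘ Δ_b^m(p)`. -/
def Sp (b p : Setoid X) : Set (Setoid X) :=
  {p' | Relation.ReflTransGen (fun u v => v ∈ Delta b u) p p'}

/-- The admissible gluings `Gl_b(p)`: partitions obtained by gluing blocks of `p`
without altering the number of blocks of the join with `b`. -/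
def Gl (b p : Setoid X) : Set (Setoid X) :=
  {p' | p ≤ p' ∧ nc (p' ⊔ b) = nc (p ⊔ b)}

/-- `p'` is directly smaller than `p` for the relation `r`. -/
def DirectlySmaller (r : Setoid X → Setoid X → Prop) (p' p : Setoid X) : Prop :=
  r p' p ∧ p' ≠ p ∧ ¬ ∃ p'', p'' ≠ p ∧ p'' ≠ p' ∧ r p' p'' ∧ r p'' p

/-- The block of the partition `p` corresponding to a class `c`. -/
def blockSet (p : Setoid X) (c : Quotient p) : Set X := {x | Quotient.mk p x = c}

/-- The number of blocks of `q` contained in the block `c` of `p`. -/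
def numSubBlocks (q p : Setoid X) (c : Quotient p) : ℕ :=
  Nat.card {d : Quotient q // blockSet q d ⊆ blockSet p c}

/-- The number of blocks of `p` containing exactly `i` blocks of `q`. -/
def rcount (q p : Setoid X) (i : ℕ) : ℕ :=
  Nat.card {c : Quotient p // numSubBlocks q p c = i}

/-- The Möbius function of the refinement order:
`μ_f(q,p) = (-1)^(nc q - nc p) ∏_i ((i-1)!)^(r_i)` for `q` finer than `p`. -/
def muf (q p : Setoid X) : ℤ :=
  (-1) ^ (nc q - nc p) *
    ∏ i ∈ Finset.range (nc q + 1), ((Nat.factorial (i - 1) : ℤ)) ^ (rcount q p i)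

/-- `P_k`: partitions of `{1,…,k} ∪ {1',…,k'}`, the left summand being the
unprimed (top) row and the right summand the primed (bottom) row. -/
abbrev Pk (k : ℕ) := Setoid (Fin k ⊕ Fin k)

/-- The identity partition `id_k = {{i, i'} : 1 ≤ i ≤ k}`. -/
def idk (k : ℕ) : Pk k := Setoid.ker (Sum.elim id id)

/-- The permutation partition associated with `σ`, with blocks `{i, σ(i)'}`. -/
def permPartition {k : ℕ} (σ : Equiv.Perm (Fin k)) : Pk k :=
  Setoid.ker (Sum.elim id σ.symm)

/-- `S_k`, the set of permutation partitions. -/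
def Sk (k : ℕ) : Set (Pk k) := Set.range (permPartition (k := k))

/-- `B_k`, the set of Brauer partitions: all blocks have exactly two elements. -/
def Bk (k : ℕ) : Set (Pk k) := {p | ∀ x, Nat.card {y | p x y} = 2}

/-- Embedding of the top/bottom rows of the upper diagram `q` into the
three-row diagram (top ⊕ (middle ⊕ bottom)). -/
def upMap (k : ℕ) : Fin k ⊕ Fin k → Fin k ⊕ (Fin k ⊕ Fin k) :=
  Sum.elim Sum.inl (fun i => Sum.inr (Sum.inl i))

/-- Embedding of the top/bottom rows of the lower diagram `p` into the
three-row diagram. -/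
def downMap (k : ℕ) : Fin k ⊕ Fin k → Fin k ⊕ (Fin k ⊕ Fin k) :=
  Sum.elim (fun i => Sum.inr (Sum.inl i)) (fun i => Sum.inr (Sum.inr i))

/-- The partition of the three-row diagram obtained by stacking a diagram of `q`
on top of a diagram of `p` (identifying the bottom row of `q` with the top row
of `p`): the equivalence relation generated by the copies of `q` and `p`. -/
def stackSetoid {k : ℕ} (p q : Pk k) : Setoid (Fin k ⊕ (Fin k ⊕ Fin k)) :=
  sInf {s | ∀ x y,
    ((∃ a b, upMap k a = x ∧ upMap k b = y ∧ q a b) ∨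
     (∃ a b, downMap k a = x ∧ downMap k b = y ∧ p a b)) → s x y}

/-- The composition `p ∘ q` (a diagram of `q` stacked above a diagram of `p`),
obtained by restricting the stacked partition to the outer rows. -/
def comp {k : ℕ} (p q : Pk k) : Pk k :=
  Setoid.comap (Sum.elim Sum.inl (fun i => Sum.inr (Sum.inr i))) (stackSetoid p q)

/-- `κ(p,q)`: the number of connected components of the stacked diagram entirely
contained in the middle row. -/
def kappaP {k : ℕ} (p q : Pk k) : ℕ :=
  Nat.card {c : Quotient (stackSetoid p q) //
    ∀ x, Quotient.mk (stackSetoid p q) x = c → ∃ i : Fin k, x = Sum.inr (Sum.inl i)}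

/-- The transpose `ᵗp`, exchanging the two rows. -/
def transpose {k : ℕ} (p : Pk k) : Pk k := Setoid.comap Sum.swap p

/-- The disjoint-union partition on a sum type. -/
def sumSetoid {α β : Type*} (p : Setoid α) (q : Setoid β) : Setoid (α ⊕ β) :=
  Setoid.ker (Sum.map (Quotient.mk p) (Quotient.mk q))

/-- Reindexing of the rows for the tensor product. -/
def reindex (k l : ℕ) :
    Fin (k + l) ⊕ Fin (k + l) → (Fin k ⊕ Fin k) ⊕ (Fin l ⊕ Fin l) :=
  Sum.elim
    (fun j => Sum.elim (fun a => Sum.inl (Sum.inl a)) (fun b => Sum.inr (Sum.inl b))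
      (finSumFinEquiv.symm j))
    (fun j => Sum.elim (fun a => Sum.inl (Sum.inr a)) (fun b => Sum.inr (Sum.inr b))
      (finSumFinEquiv.symm j))

/-- The tensor product `p ⊗ q ∈ P_{k+l}`: a diagram of `p` placed to the left of
a diagram of `q`. -/
def tensor {k l : ℕ} (p : Pk k) (q : Pk l) : Pk (k + l) :=
  Setoid.comap (reindex k l) (sumSetoid p q)

/-- The `≺`-defect `η(p,q)`. -/
def eta {k : ℕ} (p q : Pk k) : ℚ :=
  pdist (idk k) p + pdist (idk k) q - pdist (idk k) (comp p q)
    - ((k : ℚ) + (nc (comp p q) : ℚ) - (nc p : ℚ) - (nc q : ℚ)) / 2 - (kappaP p q : ℚ)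

/-- The Kreweras complement of `p'` in `p`: the set of `p''` with `p = p' ∘ p''`
realizing equality in the `≺`-defect inequality. -/
def Krew {k : ℕ} (p p' : Pk k) : Set (Pk k) :=
  {p'' | comp p' p'' = p ∧ eta p' p'' = 0}

/-- `p' ≺ p` : `p'` is an admissible prefix of `p`. -/
def prec {k : ℕ} (p' p : Pk k) : Prop :=
  ∃ p'', comp p' p'' = p ∧ eta p' p'' = 0

/-- The partition of `{1,…,k}` into the orbits (cycles) of the permutation `σ`. -/
def cycleSetoid {k : ℕ} (σ : Equiv.Perm (Fin k)) : Setoid (Fin k) :=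
  ⟨σ.SameCycle,
    ⟨fun x => Equiv.Perm.SameCycle.refl σ x, fun h => h.symm, fun h₁ h₂ => h₁.trans h₂⟩⟩

/-- A partition of `{1,…,k}` is non-crossing if there are no `a < b < c < d` with
`a, c` in one block and `b, d` in a different block. -/
def NonCrossing {k : ℕ} (π : Setoid (Fin k)) : Prop :=
  ¬ ∃ a b c d : Fin k, a < b ∧ b < c ∧ c < d ∧ π a c ∧ π b d ∧ ¬ π a b

/-- The map sending a permutation partition to the partition of `{1,…,k}` into
the orbits of the corresponding bijection (the blocks of `p ⊔ id_k` restricted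
to the top row). -/
def orbitMap {k : ℕ} (p : Pk k) : Setoid (Fin k) :=
  Setoid.comap (Sum.inl : Fin k → Fin k ⊕ Fin k) (p ⊔ idk k)

/-- The permutation `(1,k+1)(2,k+2)⋯(k,2k)` of `{1,…,2k}`. -/
def tauPerm (k : ℕ) : Equiv.Perm (Fin (k + k)) :=
  (finSumFinEquiv.symm.trans (Equiv.sumComm (Fin k) (Fin k))).trans finSumFinEquiv

/-- The left part of a partition in `P_{k₁+k₂}`. -/
def leftPart {k₁ k₂ : ℕ} (p : Pk (k₁ + k₂)) : Pk k₁ :=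
  Setoid.comap (Sum.map (Fin.castAdd k₂) (Fin.castAdd k₂)) p

/-- The right part of a partition in `P_{k₁+k₂}`. -/
def rightPart {k₁ k₂ : ℕ} (p : Pk (k₁ + k₂)) : Pk k₂ :=
  Setoid.comap (Sum.map (Fin.natAdd k₁) (Fin.natAdd k₁)) p

/-- The `p`-moment `m_p(E_N) = Tr_N(E_N ᵗp)/N^{nc(p ⊔ id_k)}
`= ∑_{p'} (E_N)_{p'} N^{nc(p ⊔ p') - nc(p ⊔ id_k)}`. -/
def momentF {k : ℕ} (E : ℕ → Pk k → ℂ) (p : Pk k) (N : ℕ) : ℂ :=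
  ∑ᶠ p' : Pk k, E N p' * (N : ℂ) ^ ((nc (p ⊔ p') : ℤ) - (nc (p ⊔ idk k) : ℤ))

/-- The `p`-cumulant `κ_p(E_N) = N^{nc p - nc (p ⊔ id_k)} (E_N)_p`. -/
def cumulantF {k : ℕ} (E : ℕ → Pk k → ℂ) (p : Pk k) (N : ℕ) : ℂ :=
  (N : ℂ) ^ ((nc p : ℤ) - (nc (p ⊔ idk k) : ℤ)) * E N p

def pairS (x y : X) : Setoid X where
  r a b := a = b ∨ (a = x ∧ b = y) ∨ (a = y ∧ b = x)
  iseqv := by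
    refine ⟨fun a => Or.inl rfl, ?_, ?_⟩
    · rintro a b (h | ⟨h1, h2⟩ | ⟨h1, h2⟩) <;> subst_vars <;> tauto
    · rintro a b c (h | ⟨h1, h2⟩ | ⟨h1, h2⟩) (g | ⟨g1, g2⟩ | ⟨g1, g2⟩) <;> subst_vars <;> tauto

def joinPair (u : Setoid X) (x y : X) : Setoid X where
  r a b := u a b ∨ (u a x ∧ u y b) ∨ (u a y ∧ u x b)
  iseqv := by
    constructor
    · exact fun a => Or.inl (u.refl' a)
    · rintro a b (h | ⟨h1, h2⟩ | ⟨h1, h2⟩)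
      · exact Or.inl (u.symm' h)
      · exact Or.inr (Or.inr ⟨u.symm' h2, u.symm' h1⟩)
      · exact Or.inr (Or.inl ⟨u.symm' h2, u.symm' h1⟩)
    · rintro a b c (h | ⟨h1, h2⟩ | ⟨h1, h2⟩) (g | ⟨g1, g2⟩ | ⟨g1, g2⟩)
      · exact Or.inl (u.trans' h g)
      · exact Or.inr (Or.inl ⟨u.trans' h g1, g2⟩)
      · exact Or.inr (Or.inr ⟨u.trans' h g1, g2⟩)
      · exact Or.inr (Or.inl ⟨h1, u.trans' h2 g⟩)
      · exact Or.inl (u.trans' h1 (u.trans' (u.symm' (u.trans' h2 g1)) g2))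
      · exact Or.inl (u.trans' h1 g2)
      · exact Or.inr (Or.inr ⟨h1, u.trans' h2 g⟩)
      · exact Or.inl (u.trans' h1 g2)
      · exact Or.inl (u.trans' h1 (u.trans' (u.symm' (u.trans' h2 g1)) g2))

lemma joinPair_rel (u : Setoid X) (x y a b : X) :
    (joinPair u x y) a b ↔
      (u a b ∨ (u a x ∧ u y b) ∨ (u a y ∧ u x b)) := Iff.rfl

lemma sup_pair (u : Setoid X) (x y : X) : u ⊔ pairS x y = joinPair u x y := by
  apply le_antisymm
  · apply sup_le
    · intro a b h; exact Or.inl h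
    · rintro a b (h | ⟨h1, h2⟩ | ⟨h1, h2⟩)
      · exact Or.inl (h ▸ u.refl' a)
      · exact subst_rel u x y a b h1 h2
      · exact Or.inr (Or.inr ⟨h1 ▸ u.refl' a, h2 ▸ u.refl' b⟩)
  · rintro a b (h | ⟨h1, h2⟩ | ⟨h1, h2⟩)
    · exact le_sup_left (α := Setoid X) h
    · have hxy : (u ⊔ pairS x y) x y :=
        le_sup_right (α := Setoid X) (Or.inr (Or.inl ⟨rfl, rfl⟩))
      exact (u ⊔ pairS x y).trans' (le_sup_left (α := Setoid X) h1)
        ((u ⊔ pairS x y).trans' hxy (le_sup_left (α := Setoid X) h2))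
    · have hyx : (u ⊔ pairS x y) y x :=
        le_sup_right (α := Setoid X) (Or.inr (Or.inr ⟨rfl, rfl⟩))
      exact (u ⊔ pairS x y).trans' (le_sup_left (α := Setoid X) h1)
        ((u ⊔ pairS x y).trans' hyx (le_sup_left (α := Setoid X) h2))
where
  subst_rel (u : Setoid X) (x y a b : X) (h1 : a = x) (h2 : b = y) :
      (joinPair u x y) a b :=
    Or.inr (Or.inl ⟨h1 ▸ u.refl' a, h2 ▸ u.refl' b⟩)

lemma le_joinPair (u : Setoid X) (x y : X) : u ≤ joinPair u x y := fun _ _ h => Or.inl h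

lemma sup_pair_of_rel (u : Setoid X) {x y : X} (h : u x y) : u ⊔ pairS x y = u := by
  rw [sup_pair]
  apply le_antisymm
  · rintro a b (g | ⟨g1, g2⟩ | ⟨g1, g2⟩)
    · exact g
    · exact u.trans' g1 (u.trans' h g2)
    · exact u.trans' g1 (u.trans' (u.symm' h) g2)
  · exact le_joinPair u x y

lemma nc_le_of_le [Finite X] {p q : Setoid X} (h : p ≤ q) : nc q ≤ nc p :=
  Nat.card_le_card_of_surjective (Quot.map id (fun a b hab => h hab))
    (fun c => by obtain ⟨a, rfl⟩ := Quot.exists_rep c; exact ⟨Quot.mk _ a, rfl⟩)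

lemma eq_of_le_of_nc_le [Finite X] {p q : Setoid X} (h : p ≤ q) (hn : nc p ≤ nc q) : p = q := by
  set f : Quotient p → Quotient q := Quot.map id (fun a b hab => h hab) with hf
  have hsurj : Function.Surjective f := by
    intro c; obtain ⟨a, rfl⟩ := Quot.exists_rep c; exact ⟨Quot.mk _ a, rfl⟩
  have hbij : Function.Bijective f := hsurj.bijective_of_nat_card_le hn
  apply le_antisymm h
  intro a b hab
  have : f (Quotient.mk p a) = f (Quotient.mk p b) := Quotient.sound' hab
  exact Quotient.exact' (hbij.1 this)

lemma nc_sup_pair [Finite X] (u : Setoid X) {x y : X} (h : ¬ u x y) :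
    nc (u ⊔ pairS x y) + 1 = nc u := by
  rw [sup_pair]
  set v := joinPair u x y with hv
  have hle : u ≤ v := le_joinPair u x y
  have wd : ∀ a b : X, v a b →
      (if u a y then Quotient.mk u x else Quotient.mk u a) =
      (if u b y then Quotient.mk u x else Quotient.mk u b) := by
    rintro a b (g | ⟨g1, g2⟩ | ⟨g1, g2⟩)
    · by_cases h1 : u a y <;> by_cases h2 : u b y
      · rw [if_pos h1, if_pos h2]
      · exact absurd (u.trans' (u.symm' g) h1) h2
      · exact absurd (u.trans' g h2) h1
      · rw [if_neg h1, if_neg h2]; exact Quotient.sound' g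
    · by_cases h1 : u a y
      · exact absurd (u.trans' (u.symm' g1) h1) h
      · by_cases h2 : u b y
        · rw [if_neg h1, if_pos h2]; exact Quotient.sound' g1
        · exact absurd (u.symm' g2) h2
    · by_cases h2 : u b y
      · exact absurd (u.trans' g2 h2) h
      · by_cases h1 : u a y
        · rw [if_pos h1, if_neg h2]; exact Quotient.sound' g2
        · exact absurd g1 h1
  set s : Quotient v → Quotient u :=
    Quotient.lift (fun a => if u a y then Quotient.mk u x else Quotient.mk u a) wd with hs
  set f : Quotient u → Quotient v := Quot.map id (fun a b hab => hle hab) with hf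
  have key : Quotient u ≃ Option (Quotient v) := by
    refine ⟨fun c => if c = Quotient.mk u y then none else some (f c),
            fun o => o.elim (Quotient.mk u y) s, ?_, ?_⟩
    · intro c
      by_cases hc : c = Quotient.mk u y
      · simp [hc]
      · simp only [if_neg hc, Option.elim_some]
        obtain ⟨a, rfl⟩ := Quot.exists_rep c
        have hay : ¬ u a y := fun hay => hc (Quotient.sound' hay)
        show s (f (Quotient.mk u a)) = Quotient.mk u a
        have h1 : f (Quotient.mk u a) = Quotient.mk v a := rfl
        have h2 : s (Quotient.mk v a) =
            (if u a y then Quotient.mk u x else Quotient.mk u a) := rfl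
        rw [h1, h2, if_neg hay]
    · rintro (_ | d)
      · simp
      · simp only [Option.elim_some]
        obtain ⟨a, rfl⟩ := Quot.exists_rep d
        show (if s (Quotient.mk v a) = Quotient.mk u y then none
            else some (f (s (Quotient.mk v a)))) = some (Quotient.mk v a)
        have h2 : s (Quotient.mk v a) =
            (if u a y then Quotient.mk u x else Quotient.mk u a) := rfl
        rw [h2]
        by_cases hay : u a y
        · rw [if_pos hay, if_neg (fun he => h (Quotient.exact' he))]
          have h1 : f (Quotient.mk u x) = Quotient.mk v x := rfl
          rw [h1]
          exact congrArg some (Quotient.sound' (Or.inr (Or.inl ⟨u.refl' x, u.symm' hay⟩)))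
        · rw [if_neg hay, if_neg (fun he => hay (Quotient.exact' he))]
          rfl
  have hcard : Nat.card (Quotient u) = Nat.card (Option (Quotient v)) := Nat.card_congr key
  haveI : Finite (Quotient v) := Quotient.finite v
  haveI : Finite (Quotient u) := Quotient.finite u
  haveI := Fintype.ofFinite (Quotient v)
  haveI := Fintype.ofFinite (Quotient u)
  rw [Nat.card_eq_fintype_card, Nat.card_eq_fintype_card, Fintype.card_option] at hcard
  rw [nc, nc, Nat.card_eq_fintype_card, Nat.card_eq_fintype_card]
  omega

lemma exists_pair_not_rel {p q : Setoid X} (hle : p ≤ q) (hne : p ≠ q) :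
    ∃ x y, q x y ∧ ¬ p x y := by
  by_contra hc
  push_neg at hc
  exact hne (le_antisymm hle fun a b hab => hc a b hab)

lemma pair_le {q : Setoid X} {x y : X} (h : q x y) : pairS x y ≤ q := by
  rintro a b (g | ⟨g1, g2⟩ | ⟨g1, g2⟩)
  · exact g ▸ q.refl' a
  · subst g1; subst g2; exact h
  · subst g1; subst g2; exact q.symm' h

lemma exists_walk_glue [Finite X] :
    ∀ (n : ℕ) (p q : Setoid X), p ≤ q → nc p = nc q + n →
    ∃ w : (glueGraph X).Walk p q, w.length = n := by
  intro n
  induction n with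
  | zero =>
    intro p q hle hn
    have : p = q := eq_of_le_of_nc_le hle (by omega)
    subst this
    exact ⟨.nil, rfl⟩
  | succ n ih =>
    intro p q hle hn
    have hne : p ≠ q := fun he => by subst he; omega
    obtain ⟨x, y, hq, hp⟩ := exists_pair_not_rel hle hne
    have hnr : nc (p ⊔ pairS x y) + 1 = nc p := nc_sup_pair p hp
    have hrq : p ⊔ pairS x y ≤ q := sup_le hle (pair_le hq)
    have adj : (glueGraph X).Adj p (p ⊔ pairS x y) := Or.inl ⟨le_sup_left, hnr⟩
    obtain ⟨w, hw⟩ := ih (p ⊔ pairS x y) q hrq (by omega)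
    exact ⟨.cons adj w, by simp [hw]⟩

lemma gluing_eq [Finite X] {a b : Setoid X} (hg : IsGluing a b) :
    ∃ x y, ¬ a x y ∧ b = a ⊔ pairS x y := by
  obtain ⟨hle, hn⟩ := hg
  have hne : a ≠ b := fun he => by subst he; omega
  obtain ⟨x, y, hbxy, hax⟩ := exists_pair_not_rel hle hne
  refine ⟨x, y, hax, ?_⟩
  have h1 : a ⊔ pairS x y ≤ b := sup_le hle (pair_le hbxy)
  have h2 : nc (a ⊔ pairS x y) + 1 = nc a := nc_sup_pair a hax
  exact (eq_of_le_of_nc_le h1 (by omega)).symm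

lemma nc_sup_adj [Finite X] {a b : Setoid X} (hg : IsGluing a b) (s : Setoid X) :
    nc (b ⊔ s) ≤ nc (a ⊔ s) ∧ nc (a ⊔ s) ≤ nc (b ⊔ s) + 1 := by
  obtain ⟨x, y, hax, rfl⟩ := gluing_eq hg
  rw [sup_right_comm]
  by_cases hr : (a ⊔ s) x y
  · rw [sup_pair_of_rel _ hr]
    omega
  · have := nc_sup_pair (a ⊔ s) hr
    omega

lemma glue_lower_bound [Finite X] :
    ∀ {p q : Setoid X} (w : (glueGraph X).Walk p q),
    (nc p : ℤ) + (nc q : ℤ) - 2 * (nc (p ⊔ q) : ℤ) ≤ w.length := by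
  intro p q w
  induction w with
  | nil => rw [sup_idem]; simp; omega
  | @cons a b c h w ih =>
    rcases h with hg | hg
    · obtain ⟨hA, hB⟩ := nc_sup_adj hg c
      have hnc := hg.2
      change _ ≤ ((w.length + 1 : ℕ) : ℤ)
      push_cast
      omega
    · obtain ⟨hA, hB⟩ := nc_sup_adj hg c
      have hnc := hg.2
      change _ ≤ ((w.length + 1 : ℕ) : ℤ)
      push_cast
      omega


/-- The Cayley graph on partitions of a finite set `X` (edges given by
gluing two blocks) is connected, the graph distance between `p` and `p'` equals
`nc p + nc p' - 2 nc (p ⊔ p')`, and the geodesic distance `d` is half the graph distance. -/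
theorem statement0 {X : Type*} [Finite X] :
    (glueGraph X).Connected ∧
    ∀ p p' : Setoid X,
      ((glueGraph X).dist p p' : ℤ) = (nc p : ℤ) + (nc p' : ℤ) - 2 * (nc (p ⊔ p') : ℤ) ∧
      pdist p p' = ((glueGraph X).dist p p' : ℚ) / 2 := by
  have key : ∀ p p' : Setoid X,
      ((glueGraph X).dist p p' : ℤ) = (nc p : ℤ) + (nc p' : ℤ) - 2 * (nc (p ⊔ p') : ℤ) ∧
      (glueGraph X).Reachable p p' := by
    intro p p'
    have n1 : nc (p ⊔ p') ≤ nc p := nc_le_of_le le_sup_left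
    have n2 : nc (p ⊔ p') ≤ nc p' := nc_le_of_le le_sup_right
    obtain ⟨w1, hw1⟩ := exists_walk_glue (nc p - nc (p ⊔ p')) p (p ⊔ p') le_sup_left (by omega)
    obtain ⟨w2, hw2⟩ := exists_walk_glue (nc p' - nc (p ⊔ p')) p' (p ⊔ p') le_sup_right (by omega)
    have hlen : (w1.append w2.reverse).length =
        (nc p - nc (p ⊔ p')) + (nc p' - nc (p ⊔ p')) := by
      rw [SimpleGraph.Walk.length_append, SimpleGraph.Walk.length_reverse, hw1, hw2]
    have hreach : (glueGraph X).Reachable p p' := ⟨w1.append w2.reverse⟩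
    have hub : (glueGraph X).dist p p' ≤ (nc p - nc (p ⊔ p')) + (nc p' - nc (p ⊔ p')) :=
      hlen ▸ SimpleGraph.dist_le _
    obtain ⟨w0, hw0⟩ := hreach.exists_walk_length_eq_dist
    have hlb := glue_lower_bound w0
    rw [hw0] at hlb
    exact ⟨by omega, hreach⟩
  haveI : Nonempty (Setoid X) := ⟨⊥⟩
  refine ⟨⟨fun p p' => (key p p').2⟩, fun p p' => ⟨(key p p').1, ?_⟩⟩
  have h1 := (key p p').1
  have h2 := congrArg (fun z : ℤ => (z : ℚ)) h1
  push_cast at h2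
  rw [pdist]
  linarith


end PartitionPaper
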